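/- On the region Ω = {x : r(x) > 0}, the retarded distance r is smooth and its gradient satisfies r_{,a} = ∂r/∂x^a = −v_a + (1 + r a·k) k_a for a = 0,1,2,3, where v_a = η_{ab}v^b and k_a = η_{ab}k^b. -/

import Mathlib

open scoped BigOperators

noncomputable section

/-- The Minkowski metric η = diag(−1,1,1,1) on ℝ⁴. -/
def eta (i j : Fin 4) : ℝ := if i = j then (if i = 0 then -1 else 1) else 0

/-- Minkowski inner product a·b = η_{ij} a^i b^j. -/
def mdot (a b : Fin 4 → ℝ) : ℝ := ∑ i, ∑ j, eta i j * a i * b j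

/-- Lowering an index with η : k_i = η_{ij} k^j. -/
def lo (a : Fin 4 → ℝ) (i : Fin 4) : ℝ := ∑ j, eta i j * a j

lemma mdot_eq (a b : Fin 4 → ℝ) :
    mdot a b = -(a 0 * b 0) + a 1 * b 1 + a 2 * b 2 + a 3 * b 3 := by
  simp [mdot, eta, Fin.sum_univ_four]

lemma mdot_symm (a b : Fin 4 → ℝ) : mdot a b = mdot b a := by
  rw [mdot_eq, mdot_eq]; ring

lemma lo_eq (b : Fin 4 → ℝ) (a : Fin 4) : lo b a = mdot b (Pi.single a 1) := by
  fin_cases a <;>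
    simp [lo, mdot_eq, eta, Fin.sum_univ_four, Pi.single_apply]

def mdotL (b : Fin 4 → ℝ) : (Fin 4 → ℝ) →L[ℝ] ℝ :=
  -(b 0 • ContinuousLinearMap.proj 0) + b 1 • ContinuousLinearMap.proj 1
    + b 2 • ContinuousLinearMap.proj 2 + b 3 • ContinuousLinearMap.proj 3

lemma mdotL_apply (b c : Fin 4 → ℝ) : mdotL b c = mdot b c := by
  simp [mdotL, mdot_eq]

lemma mdot_smul_left (c : ℝ) (a b : Fin 4 → ℝ) : mdot (c • a) b = c * mdot a b := by
  simp [mdot_eq]; ring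

lemma mdot_sub_right (a b c : Fin 4 → ℝ) : mdot a (b - c) = mdot a b - mdot a c := by
  simp [mdot_eq]; ring

lemma mdot_smul_right (c : ℝ) (a b : Fin 4 → ℝ) : mdot a (c • b) = c * mdot a b := by
  simp [mdot_eq]; ring

lemma hasFDerivAt_mdot {E : Type*} [NormedAddCommGroup E] [NormedSpace ℝ E]
    {f g : E → Fin 4 → ℝ} {f' g' : E →L[ℝ] (Fin 4 → ℝ)} {x : E}
    (hf : HasFDerivAt f f' x) (hg : HasFDerivAt g g' x) :
    HasFDerivAt (fun y => mdot (f y) (g y))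
      ((mdotL (g x)).comp f' + (mdotL (f x)).comp g') x := by
  have hfi : ∀ i : Fin 4, HasFDerivAt (fun y => f y i)
      ((ContinuousLinearMap.proj i).comp f') x := fun i =>
    ((ContinuousLinearMap.proj i : (Fin 4 → ℝ) →L[ℝ] ℝ).hasFDerivAt.comp x hf :)
  have hgi : ∀ i : Fin 4, HasFDerivAt (fun y => g y i)
      ((ContinuousLinearMap.proj i).comp g') x := fun i =>
    ((ContinuousLinearMap.proj i : (Fin 4 → ℝ) →L[ℝ] ℝ).hasFDerivAt.comp x hg :)
  have H := ((((hfi 0).mul (hgi 0)).neg.add ((hfi 1).mul (hgi 1))).add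
      ((hfi 2).mul (hgi 2))).add ((hfi 3).mul (hgi 3))
  have hfun : (fun y => mdot (f y) (g y))
      = fun y => -(f y 0 * g y 0) + f y 1 * g y 1 + f y 2 * g y 2 + f y 3 * g y 3 :=
    funext fun y => mdot_eq _ _
  rw [hfun]
  refine H.congr_fderiv ?_
  apply ContinuousLinearMap.ext
  intro w
  simp [mdotL, mdot_eq]
  ring

lemma contDiffAt_mdot {E : Type*} [NormedAddCommGroup E] [NormedSpace ℝ E]
    {n : WithTop ℕ∞} {f g : E → Fin 4 → ℝ} {x : E}
    (hf : ContDiffAt ℝ n f x) (hg : ContDiffAt ℝ n g x) :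
    ContDiffAt ℝ n (fun y => mdot (f y) (g y)) x := by
  have hfi := fun i => contDiffAt_pi.mp hf i
  have hgi := fun i => contDiffAt_pi.mp hg i
  have hfun : (fun y => mdot (f y) (g y))
      = fun y => -(f y 0 * g y 0) + f y 1 * g y 1 + f y 2 * g y 2 + f y 3 * g y 3 :=
    funext fun y => mdot_eq _ _
  rw [hfun]
  exact ((((hfi 0).mul (hgi 0)).neg.add ((hfi 1).mul (hgi 1))).add
      ((hfi 2).mul (hgi 2))).add ((hfi 3).mul (hgi 3))


set_option maxHeartbeats 1000000 in
/-- The retarded distance `r` is smooth on Ω = {x | r x > 0} and its gradient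
is `r_{,a} = −v_a + (1 + r a·k) k_a`. -/
theorem retarded_distance_smooth_gradient
    (z : ℝ → Fin 4 → ℝ) (hz : ContDiff ℝ (⊤ : ℕ∞) z)
    (v : ℝ → Fin 4 → ℝ) (hv : ∀ τ i, v τ i = deriv (fun t => z t i) τ)
    (acc : ℝ → Fin 4 → ℝ) (hacc : ∀ τ i, acc τ i = deriv (fun t => v t i) τ)
    (hunit : ∀ τ, mdot (v τ) (v τ) = -1)
    (hfut : ∀ τ, 0 < v τ 0)
    (u : (Fin 4 → ℝ) → ℝ)
    (hu : ∀ x, mdot (x - z (u x)) (x - z (u x)) = 0 ∧ z (u x) 0 ≤ x 0)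
    (huniq : ∀ x τ, mdot (x - z τ) (x - z τ) = 0 → z τ 0 ≤ x 0 → τ = u x)
    (r : (Fin 4 → ℝ) → ℝ)
    (hr : ∀ x, r x = -mdot (v (u x)) (x - z (u x)))
    (k : (Fin 4 → ℝ) → Fin 4 → ℝ)
    (hk : ∀ x, k x = (r x)⁻¹ • (x - z (u x))) :
    ContDiffOn ℝ (⊤ : ℕ∞) r {x | 0 < r x} ∧
    ∀ x ∈ {x : Fin 4 → ℝ | 0 < r x}, ∀ a : Fin 4,
      fderiv ℝ r x (Pi.single a 1) =
        -(lo (v (u x)) a) + (1 + r x * mdot (acc (u x)) (k x)) * lo (k x) a := by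
  -- basic smoothness facts
  have h1top : ((⊤ : ℕ∞) : WithTop ℕ∞) ≠ 0 := by
    simp
  have hzi : ∀ i, ContDiff ℝ ((⊤:ℕ∞) : WithTop ℕ∞) (fun t => z t i) :=
    fun i => contDiff_pi.mp hz i
  have hvC : ContDiff ℝ ((⊤:ℕ∞) : WithTop ℕ∞) v := by
    rw [contDiff_pi]
    intro i
    have hvi : (fun τ => v τ i) = deriv (fun t => z t i) := funext fun τ => hv τ i
    rw [hvi]
    exact (contDiff_infty_iff_deriv.mp (hzi i)).2
  have hzd : ∀ τ, HasDerivAt z (v τ) τ := by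
    intro τ
    refine hasDerivAt_pi.mpr fun i => ?_
    rw [hv]
    exact ((hzi i).differentiable h1top τ).hasDerivAt
  have hvd : ∀ τ, HasDerivAt v (acc τ) τ := by
    intro τ
    refine hasDerivAt_pi.mpr fun i => ?_
    rw [hacc]
    exact ((contDiff_pi.mp hvC i).differentiable h1top τ).hasDerivAt
  -- the implicit function F
  set F : ((Fin 4 → ℝ) × ℝ) → ℝ :=
    fun p => mdot (p.1 - z p.2) (p.1 - z p.2) with hF_def
  set DW : ((Fin 4 → ℝ) × ℝ) → ((Fin 4 → ℝ) × ℝ) →L[ℝ] (Fin 4 → ℝ) :=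
    fun p => ContinuousLinearMap.fst ℝ (Fin 4 → ℝ) ℝ
      - (ContinuousLinearMap.smulRight (1 : ℝ →L[ℝ] ℝ) (v p.2)).comp
          (ContinuousLinearMap.snd ℝ (Fin 4 → ℝ) ℝ) with hDW_def
  have hWd : ∀ p : (Fin 4 → ℝ) × ℝ,
      HasFDerivAt (fun q : (Fin 4 → ℝ) × ℝ => q.1 - z q.2) (DW p) p := by
    intro p
    exact hasFDerivAt_fst.sub
      (((hzd p.2).hasFDerivAt.comp p hasFDerivAt_snd :))
  set DF : ((Fin 4 → ℝ) × ℝ) → ((Fin 4 → ℝ) × ℝ) →L[ℝ] ℝ :=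
    fun p => (mdotL (p.1 - z p.2)).comp (DW p) + (mdotL (p.1 - z p.2)).comp (DW p)
    with hDF_def
  have hFd : ∀ p, HasFDerivAt F (DF p) p := fun p => hasFDerivAt_mdot (hWd p) (hWd p)
  have hDF_apply : ∀ p q : (Fin 4 → ℝ) × ℝ,
      DF p q = 2 * mdot (p.1 - z p.2) q.1 - 2 * mdot (p.1 - z p.2) (v p.2) * q.2 := by
    intro p q
    simp [hDF_def, hDW_def, mdotL_apply, mdot_sub_right, mdot_smul_right]
    ring
  have hWC : ContDiff ℝ ((⊤:ℕ∞) : WithTop ℕ∞)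
      (fun q : (Fin 4 → ℝ) × ℝ => q.1 - z q.2) :=
    contDiff_fst.sub (hz.comp contDiff_snd)
  -- key pointwise facts on Ω
  have hmvw : ∀ x₀ : Fin 4 → ℝ, mdot (x₀ - z (u x₀)) (v (u x₀)) = -(r x₀) := by
    intro x₀
    rw [mdot_symm, hr x₀]; ring
  have hw0pos : ∀ x₀ : Fin 4 → ℝ, 0 < r x₀ → z (u x₀) 0 < x₀ 0 := by
    intro x₀ hx₀
    rcases hu x₀ with ⟨hnull, hle⟩
    rcases lt_or_eq_of_le hle with h | h
    · exact h
    · exfalso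
      set w₀ : Fin 4 → ℝ := x₀ - z (u x₀) with hw₀
      have h0 : w₀ 0 = 0 := by simp [hw₀, Pi.sub_apply, ← h]
      rw [mdot_eq] at hnull
      have h1 : w₀ 1 = 0 := by nlinarith [sq_nonneg (w₀ 1), sq_nonneg (w₀ 2), sq_nonneg (w₀ 3)]
      have h2 : w₀ 2 = 0 := by nlinarith [sq_nonneg (w₀ 1), sq_nonneg (w₀ 2), sq_nonneg (w₀ 3)]
      have h3 : w₀ 3 = 0 := by nlinarith [sq_nonneg (w₀ 1), sq_nonneg (w₀ 2), sq_nonneg (w₀ 3)]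
      have : r x₀ = 0 := by
        rw [hr x₀, mdot_eq, ← hw₀, h0, h1, h2, h3]; ring
      linarith
  -- u is smooth at every point of Ω
  have key : ∀ x₀ : Fin 4 → ℝ, 0 < r x₀ → ContDiffAt ℝ ((⊤:ℕ∞) : WithTop ℕ∞) u x₀ := by
    intro x₀ hx₀
    set p₀ : (Fin 4 → ℝ) × ℝ := (x₀, u x₀) with hp₀
    -- the linear equivalence (shear)
    set c : ℝ := 2 * r x₀ with hc
    have hcne : c ≠ 0 := by positivity
    set A : ((Fin 4 → ℝ) × ℝ) →L[ℝ] ((Fin 4 → ℝ) × ℝ) :=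
      (ContinuousLinearMap.fst ℝ (Fin 4 → ℝ) ℝ).prod (DF p₀) with hA
    set B : ((Fin 4 → ℝ) × ℝ) →L[ℝ] ((Fin 4 → ℝ) × ℝ) :=
      (ContinuousLinearMap.fst ℝ (Fin 4 → ℝ) ℝ).prod
        (c⁻¹ • (ContinuousLinearMap.snd ℝ (Fin 4 → ℝ) ℝ
          - (2:ℝ) • (mdotL (x₀ - z (u x₀))).comp (ContinuousLinearMap.fst ℝ (Fin 4 → ℝ) ℝ)))
      with hB
    have hA_apply : ∀ q : (Fin 4 → ℝ) × ℝ,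
        A q = (q.1, 2 * mdot (x₀ - z (u x₀)) q.1 + c * q.2) := by
      intro q
      have := hDF_apply p₀ q
      rw [hmvw x₀] at this
      simp only [hA, ContinuousLinearMap.prod_apply, ContinuousLinearMap.coe_fst', this]
      simp only [Prod.mk.injEq, hc]
      exact ⟨trivial, by ring⟩
    have hB_apply : ∀ q : (Fin 4 → ℝ) × ℝ,
        B q = (q.1, c⁻¹ * (q.2 - 2 * mdot (x₀ - z (u x₀)) q.1)) := by
      intro q
      simp [hB, mdotL_apply, smul_eq_mul]
      try ring
    have hBA : Function.LeftInverse B A := by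
      intro q
      rw [hA_apply, hB_apply]
      obtain ⟨q1, q2⟩ := q
      simp only [Prod.mk.injEq]
      refine ⟨by trivial, ?_⟩
      field_simp
      ring
    have hAB : Function.RightInverse B A := by
      intro q
      rw [hB_apply, hA_apply]
      obtain ⟨q1, q2⟩ := q
      simp only [Prod.mk.injEq]
      refine ⟨by trivial, ?_⟩
      field_simp
      ring
    set e : ((Fin 4 → ℝ) × ℝ) ≃L[ℝ] ((Fin 4 → ℝ) × ℝ) :=
      ContinuousLinearEquiv.equivOfInverse A B hBA hAB with he
    -- Φ and its inverse
    set Φ : ((Fin 4 → ℝ) × ℝ) → ((Fin 4 → ℝ) × ℝ) := fun p => (p.1, F p) with hΦ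
    have hΦC : ContDiffAt ℝ ((⊤:ℕ∞) : WithTop ℕ∞) Φ p₀ :=
      (contDiff_fst.contDiffAt).prodMk (contDiffAt_mdot hWC.contDiffAt hWC.contDiffAt)
    have hΦd : HasFDerivAt Φ (e : ((Fin 4 → ℝ) × ℝ) →L[ℝ] ((Fin 4 → ℝ) × ℝ)) p₀ :=
      hasFDerivAt_fst.prodMk (hFd p₀)
    have hΦp₀ : Φ p₀ = (x₀, 0) := by
      simp only [hΦ, hp₀]
      exact Prod.ext rfl (hu x₀).1
    have hs : HasStrictFDerivAt Φ (e : ((Fin 4 → ℝ) × ℝ) →L[ℝ] ((Fin 4 → ℝ) × ℝ)) p₀ :=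
      hΦC.hasStrictFDerivAt' hΦd h1top
    set Ψ : ((Fin 4 → ℝ) × ℝ) → ((Fin 4 → ℝ) × ℝ) := hs.localInverse Φ e p₀ with hΨ
    have hΨC : ContDiffAt ℝ ((⊤:ℕ∞) : WithTop ℕ∞) Ψ (x₀, 0) := by
      have := hΦC.to_localInverse hΦd h1top
      rw [hΦp₀] at this
      exact this
    have hΨ0 : Ψ (x₀, 0) = p₀ := by
      rw [← hΦp₀]
      exact hs.localInverse_apply_image
    set g : (Fin 4 → ℝ) → ℝ := fun x => (Ψ (x, 0)).2 with hg
    have hpair : ContDiffAt ℝ ((⊤:ℕ∞) : WithTop ℕ∞) (fun x : Fin 4 → ℝ => ((x, (0:ℝ)) : (Fin 4 → ℝ) × ℝ)) x₀ :=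
      contDiffAt_id.prodMk contDiffAt_const
    have hgC : ContDiffAt ℝ ((⊤:ℕ∞) : WithTop ℕ∞) g x₀ :=
      contDiffAt_snd.comp x₀ (hΨC.comp x₀ hpair)
    have hg0 : g x₀ = u x₀ := by rw [hg]; simp only [hΨ0, hp₀]
    -- eventually g = u
    have hev1 : ∀ᶠ x : (Fin 4 → ℝ) in nhds x₀, Φ (Ψ (x, 0)) = (x, 0) := by
      have h := hs.eventually_right_inverse
      rw [hΦp₀] at h
      exact (hpair.continuousAt).eventually h
    have hev2 : ∀ᶠ x : (Fin 4 → ℝ) in nhds x₀, 0 < x 0 - z (g x) 0 := by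
      have hcont : ContinuousAt (fun x : Fin 4 → ℝ => x 0 - z (g x) 0) x₀ := by
        exact ((continuous_apply 0).continuousAt).sub
          (((continuous_apply 0).comp hz.continuous).continuousAt.comp
            hgC.continuousAt)
      have hpos : (0:ℝ) < x₀ 0 - z (g x₀) 0 := by
        rw [hg0]
        have := hw0pos x₀ hx₀
        linarith
      exact hcont.eventually_mem (Ioi_mem_nhds hpos)
    have heq : ∀ᶠ x : (Fin 4 → ℝ) in nhds x₀, u x = g x := by
      filter_upwards [hev1, hev2] with x h1 h2
      have hfst : (Ψ (x, 0)).1 = x := congrArg Prod.fst h1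
      have hFz : F (Ψ (x, 0)) = 0 := congrArg Prod.snd h1
      have hFz' : mdot (x - z (g x)) (x - z (g x)) = 0 := by
        rw [hF_def] at hFz
        simpa [hfst] using hFz
      exact (huniq x (g x) hFz' (by linarith)).symm
    exact hgC.congr_of_eventuallyEq heq
  -- smoothness of r on Ω
  have hrC : ∀ x₀ : Fin 4 → ℝ, 0 < r x₀ → ContDiffAt ℝ ((⊤:ℕ∞) : WithTop ℕ∞) r x₀ := by
    intro x₀ hx₀
    have hrfun : r = fun x => -mdot (v (u x)) (x - z (u x)) := funext hr
    rw [hrfun]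
    have hVC : ContDiffAt ℝ ((⊤:ℕ∞) : WithTop ℕ∞) (fun x => v (u x)) x₀ :=
      (hvC.contDiffAt).comp x₀ (key x₀ hx₀)
    have hWC2 : ContDiffAt ℝ ((⊤:ℕ∞) : WithTop ℕ∞) (fun x : Fin 4 → ℝ => x - z (u x)) x₀ :=
      contDiffAt_id.sub ((hz.contDiffAt).comp x₀ (key x₀ hx₀))
    exact (contDiffAt_mdot hVC hWC2).neg
  constructor
  · exact fun x hx => (hrC x hx).contDiffWithinAt
  · intro x₀ hx₀ a
    have hx₀' : 0 < r x₀ := hx₀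
    set τ₀ := u x₀ with hτ₀
    set w₀ : Fin 4 → ℝ := x₀ - z τ₀ with hw₀
    have hU : HasFDerivAt u (fderiv ℝ u x₀) x₀ :=
      ((key x₀ hx₀').differentiableAt h1top).hasFDerivAt
    set U' := fderiv ℝ u x₀ with hU'
    -- implicit differentiation: value of U' on Pi.single a 1
    have hcomp : HasFDerivAt (fun x : Fin 4 → ℝ => F (x, u x))
        ((DF (x₀, τ₀)).comp ((ContinuousLinearMap.id ℝ (Fin 4 → ℝ)).prod U')) x₀ :=
      ((hFd (x₀, τ₀)).comp x₀ ((hasFDerivAt_id x₀).prodMk hU) :)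
    have hzerod : (DF (x₀, τ₀)).comp ((ContinuousLinearMap.id ℝ (Fin 4 → ℝ)).prod U') = 0 := by
      have hzerof : (fun x : Fin 4 → ℝ => F (x, u x)) = fun _ => (0:ℝ) :=
        funext fun x => (hu x).1
      have h0 : HasFDerivAt (fun x : Fin 4 → ℝ => F (x, u x)) 0 x₀ :=
        (hasFDerivAt_const (𝕜 := ℝ) (E := Fin 4 → ℝ) (0:ℝ) x₀).congr_of_eventuallyEq
          (Filter.Eventually.of_forall fun x => (hu x).1)
      exact hcomp.unique h0
    have hUa : 2 * mdot w₀ (Pi.single a 1) + 2 * r x₀ * U' (Pi.single a 1) = 0 := by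
      have h := ContinuousLinearMap.ext_iff.mp hzerod (Pi.single a 1)
      rw [ContinuousLinearMap.comp_apply] at h
      have h2 : ((ContinuousLinearMap.id ℝ (Fin 4 → ℝ)).prod U') (Pi.single a 1)
          = (Pi.single a 1, U' (Pi.single a 1)) := rfl
      rw [h2, hDF_apply] at h
      simp only [ContinuousLinearMap.zero_apply] at h
      have hm := hmvw x₀
      rw [← hτ₀, ← hw₀] at hm
      rw [hm] at h
      linarith [h]
    -- derivative of r
    have hVd : HasFDerivAt (fun x => v (u x))
        ((ContinuousLinearMap.smulRight (1 : ℝ →L[ℝ] ℝ) (acc τ₀)).comp U') x₀ :=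
      ((hvd τ₀).hasFDerivAt.comp x₀ hU :)
    have hZd : HasFDerivAt (fun x => z (u x))
        ((ContinuousLinearMap.smulRight (1 : ℝ →L[ℝ] ℝ) (v τ₀)).comp U') x₀ :=
      ((hzd τ₀).hasFDerivAt.comp x₀ hU :)
    have hWd2 : HasFDerivAt (fun x : Fin 4 → ℝ => x - z (u x))
        (ContinuousLinearMap.id ℝ (Fin 4 → ℝ)
          - (ContinuousLinearMap.smulRight (1 : ℝ →L[ℝ] ℝ) (v τ₀)).comp U') x₀ :=
      (hasFDerivAt_id x₀).sub hZd
    have hRd : HasFDerivAt r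
        (-((mdotL w₀).comp ((ContinuousLinearMap.smulRight (1 : ℝ →L[ℝ] ℝ) (acc τ₀)).comp U')
          + (mdotL (v τ₀)).comp (ContinuousLinearMap.id ℝ (Fin 4 → ℝ)
            - (ContinuousLinearMap.smulRight (1 : ℝ →L[ℝ] ℝ) (v τ₀)).comp U'))) x₀ := by
      have hrfun : r = fun x => -mdot (v (u x)) (x - z (u x)) := funext hr
      rw [hrfun]
      exact (hasFDerivAt_mdot hVd hWd2).neg
    rw [hRd.fderiv]
    -- evaluate
    have hUval : U' (Pi.single a 1) = -(r x₀)⁻¹ * mdot w₀ (Pi.single a 1) := by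
      field_simp
      linarith [hUa]
    have hkx : k x₀ = (r x₀)⁻¹ • w₀ := by rw [hk x₀, ← hτ₀, ← hw₀]
    have hrne : r x₀ ≠ 0 := ne_of_gt hx₀'
    simp only [ContinuousLinearMap.neg_apply, ContinuousLinearMap.add_apply,
      ContinuousLinearMap.comp_apply, ContinuousLinearMap.smul_apply,
      ContinuousLinearMap.sub_apply, ContinuousLinearMap.coe_id', id_eq,
      ContinuousLinearMap.smulRight_apply, ContinuousLinearMap.one_apply,
      mdotL_apply]
    rw [hUval]
    rw [lo_eq (v τ₀) a, lo_eq (k x₀) a, hkx]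
    rw [mdot_smul_left, mdot_smul_right, mdot_sub_right, mdot_smul_right, hunit τ₀]
    rw [mdot_smul_right, mdot_symm (acc τ₀) w₀]
    field_simp
    ring
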